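/- The diagonal boundary matrix K(λ) = diag(f_α(λ), 1) with f_α(λ) = (iα+2λ)/(iα-2λ) satisfies the classical reflection equation [r(λ-η), K(λ)⊗K(η)] = (I⊗K(η)) r(λ+η) (K(λ)⊗I) - (K(λ)⊗I) r(λ+η) (I⊗K(η)), where r(λ) = P/(2λ) and P is the 4×4 permutation matrix on C²⊗C². -/

import Mathlib

open Complex Matrix Kronecker

/-- Permutation matrix on ℂ² ⊗ ℂ²: P(u⊗v) = v⊗u. -/
noncomputable def Pmat : Matrix (Fin 2 × Fin 2) (Fin 2 × Fin 2) ℂ :=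
  Matrix.of fun p q => if p.1 = q.2 ∧ p.2 = q.1 then 1 else 0

/-- Classical r-matrix r(λ) = P/(2λ). -/
noncomputable def rmat (l : ℂ) : Matrix (Fin 2 × Fin 2) (Fin 2 × Fin 2) ℂ :=
  (1 / (2 * l)) • Pmat

noncomputable def fα (α : ℝ) (l : ℂ) : ℂ := (I * α + 2 * l) / (I * α - 2 * l)

noncomputable def Kmat (α : ℝ) (l : ℂ) : Matrix (Fin 2) (Fin 2) ℂ :=
  !![fα α l, 0; 0, 1]

set_option maxHeartbeats 1600000 in
theorem stmt3 (α : ℝ) (l η : ℂ)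
    (hlη : l - η ≠ 0) (hlη' : l + η ≠ 0)
    (hl1 : l ≠ I * α / 2) (hl2 : l ≠ -(I * α / 2))
    (hη1 : η ≠ I * α / 2) (hη2 : η ≠ -(I * α / 2)) :
    rmat (l - η) * (Kmat α l ⊗ₖ Kmat α η) - (Kmat α l ⊗ₖ Kmat α η) * rmat (l - η) =
      ((1 : Matrix (Fin 2) (Fin 2) ℂ) ⊗ₖ Kmat α η) * rmat (l + η) *
        (Kmat α l ⊗ₖ (1 : Matrix (Fin 2) (Fin 2) ℂ)) -
      (Kmat α l ⊗ₖ (1 : Matrix (Fin 2) (Fin 2) ℂ)) * rmat (l + η) *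
        ((1 : Matrix (Fin 2) (Fin 2) ℂ) ⊗ₖ Kmat α η) := by
  have hdl : I * α - 2 * l ≠ 0 := by
    intro h; apply hl1; field_simp; linear_combination -h
  have hdη : I * α - 2 * η ≠ 0 := by
    intro h; apply hη1; field_simp; linear_combination -h
  have h2m : (2:ℂ) * (l - η) ≠ 0 := by
    simpa using hlη
  have h2p : (2:ℂ) * (l + η) ≠ 0 := by
    simpa using hlη'
  have hdl' : I * α - l * 2 ≠ 0 := by rwa [mul_comm l]
  have hdη' : I * α - η * 2 ≠ 0 := by rwa [mul_comm η]
  ext ⟨i, j⟩ ⟨k, m⟩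
  simp only [rmat, Pmat, Kmat, Matrix.sub_apply, Matrix.mul_apply, Matrix.smul_apply,
    Fintype.sum_prod_type, Fin.sum_univ_two, kroneckerMap_apply, Matrix.of_apply,
    smul_eq_mul, Matrix.one_apply]
  fin_cases i <;> fin_cases j <;> fin_cases k <;> fin_cases m <;>
    simp only [Matrix.cons_val', Matrix.cons_val_zero, Matrix.cons_val_one, Matrix.head_cons,
      Matrix.empty_val', Matrix.cons_val_fin_one, Matrix.head_fin_const, Fin.isValue,
      if_true, if_false, Prod.mk.injEq, Fin.zero_eq_one_iff, Fin.one_eq_zero_iff,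
      Nat.succ_ne_self, and_true, and_false, true_and, false_and, and_self, ite_true, ite_false,
      mul_zero, zero_mul, mul_one, one_mul, add_zero, zero_add, sub_zero, zero_sub, sub_self] <;>
    first
      | rfl
      | (simp [Fin.ext_iff] <;> simp only [fα] <;> field_simp [h2m, h2p, hdl, hdη, hdl', hdη'] <;> ring)
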